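/- arXiv:1912.12159 — 8 statements merged into one kernel-verified Lean document; each statement's English description precedes it below -/
import Mathlib

section
/- Let R be a (possibly noncommutative) ring and a ∈ R not nilpotent. Then there exists a two-sided ideal I of R which is prime (i.e., for ideals U, V with UV ⊆ I, either U ⊆ I or V ⊆ I) such that a + I is a minimal non-nilpotent element of R/I. -/
/-- A two-sided ideal `I` of a ring is *prime* if `I ≠ R` and for all two-sided
ideals `U`, `V`, `UV ⊆ I` implies `U ⊆ I` or `V ⊆ I`. -/
def TwoSidedIdeal.IsPrimeIdeal {R : Type*} [Ring R] (I : TwoSidedIdeal R) : Prop :=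
  I ≠ ⊤ ∧ ∀ U V : TwoSidedIdeal R,
    (∀ u ∈ U, ∀ v ∈ V, u * v ∈ I) → U ≤ I ∨ V ≤ I

/-- For every non-nilpotent element `a` of a ring `R` there is a prime two-sided
ideal `I` such that `a + I` is a minimal non-nilpotent element of `R/I`:
no power of `a` lies in `I` (so `a + I` is not nilpotent), but for every
two-sided ideal `J` properly containing `I` (i.e. every nonzero ideal of `R/I`)
some power of `a` lies in `J`. -/
theorem exists_prime_minimal_non_nilpotent {R : Type*} [Ring R] (a : R)
    (ha : ¬ IsNilpotent a) :
    ∃ I : TwoSidedIdeal R, I.IsPrimeIdeal ∧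
      (∀ n : ℕ, a ^ n ∉ I) ∧
      (∀ J : TwoSidedIdeal R, I < J → ∃ n : ℕ, a ^ n ∈ J) := by
  set S : Set (TwoSidedIdeal R) := {I | ∀ n : ℕ, a ^ n ∉ I} with hS
  have hbot : (⊥ : TwoSidedIdeal R) ∈ S := by
    intro n hn
    rw [TwoSidedIdeal.mem_bot] at hn
    exact ha ⟨n, hn⟩
  have hub : ∀ c ⊆ S, IsChain (· ≤ ·) c → ∀ y ∈ c, ∃ ub ∈ S, ∀ z ∈ c, z ≤ ub := by
    intro c hcS hchain y hy
    refine ⟨TwoSidedIdeal.mk' (⋃ J ∈ c, (J : Set R)) ?_ ?_ ?_ ?_ ?_, ?_, ?_⟩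
    · exact Set.mem_biUnion hy (TwoSidedIdeal.zero_mem _)
    · rintro x z hx hz
      simp only [Set.mem_iUnion] at hx hz ⊢
      obtain ⟨J₁, hJ₁, hx⟩ := hx
      obtain ⟨J₂, hJ₂, hz⟩ := hz
      rcases hchain.total hJ₁ hJ₂ with h | h
      · exact ⟨J₂, hJ₂, J₂.add_mem (h hx) hz⟩
      · exact ⟨J₁, hJ₁, J₁.add_mem hx (h hz)⟩
    · rintro x hx
      simp only [Set.mem_iUnion] at hx ⊢
      obtain ⟨J, hJ, hx⟩ := hx
      exact ⟨J, hJ, J.neg_mem hx⟩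
    · rintro x z hz
      simp only [Set.mem_iUnion] at hz ⊢
      obtain ⟨J, hJ, hz⟩ := hz
      exact ⟨J, hJ, J.mul_mem_left _ _ hz⟩
    · rintro x z hx
      simp only [Set.mem_iUnion] at hx ⊢
      obtain ⟨J, hJ, hx⟩ := hx
      exact ⟨J, hJ, J.mul_mem_right _ _ hx⟩
    · intro n hn
      rw [TwoSidedIdeal.mem_mk'] at hn
      simp only [Set.mem_iUnion] at hn
      obtain ⟨J, hJ, hn⟩ := hn
      exact hcS hJ n hn
    · intro J hJ x hx
      rw [TwoSidedIdeal.mem_mk']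
      exact Set.mem_biUnion hJ hx
  obtain ⟨I, -, hIS, hImax⟩ := zorn_le_nonempty₀ S hub ⊥ hbot
  have hmax' : ∀ J : TwoSidedIdeal R, I < J → ∃ n : ℕ, a ^ n ∈ J := by
    intro J hIJ
    by_contra h
    push_neg at h
    exact hIJ.ne' (le_antisymm (hImax h hIJ.le) hIJ.le)
  refine ⟨I, ⟨?_, ?_⟩, hIS, hmax'⟩
  · intro htop
    exact hIS 0 (htop ▸ TwoSidedIdeal.mem_top R)
  · intro U V hUV
    by_contra h
    push_neg at h
    obtain ⟨hU, hV⟩ := h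
    have hIU : I < I ⊔ U := lt_of_le_of_ne le_sup_left (by
      intro hEq
      exact hU (le_sup_right.trans hEq.ge))
    have hIV : I < I ⊔ V := lt_of_le_of_ne le_sup_left (by
      intro hEq
      exact hV (le_sup_right.trans hEq.ge))
    obtain ⟨m, hm⟩ := hmax' _ hIU
    obtain ⟨k, hk⟩ := hmax' _ hIV
    rw [TwoSidedIdeal.mem_sup] at hm hk
    obtain ⟨i, hi, u, hu, hmu⟩ := hm
    obtain ⟨j, hj, v, hv, hkv⟩ := hk
    apply hIS (m + k)
    have : a ^ (m + k) = (i + u) * (j + v) := by rw [hmu, hkv, pow_add]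
    rw [this]
    have expand : (i + u) * (j + v) = i * (j + v) + u * j + u * v := by noncomm_ring
    rw [expand]
    refine I.add_mem (I.add_mem ?_ ?_) (hUV u hu v hv)
    · exact I.mul_mem_right _ _ hi
    · exact I.mul_mem_left _ _ hj
end

section
/- Let F be a field and R an F-algebra generated (as an F-algebra) by two principally nilpotent elements x, y. Then R is a local ring whose Jacobson radical equals xR + yR, and also equals Rx + Ry. -/
/-- An element `a` of a ring is *principally nilpotent* if every element of the
right ideal `aR` is nilpotent. -/
def PrincipallyNilpotent {R : Type*} [Ring R] (a : R) : Prop :=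
  ∀ r : R, IsNilpotent (a * r)

private lemma pow_swap_aux {R : Type*} [Ring R] (a b : R) :
    ∀ n : ℕ, (b * a) ^ (n + 1) = b * (a * b) ^ n * a
  | 0 => by simp
  | n + 1 => by
    rw [pow_succ, pow_swap_aux a b n, pow_succ]
    noncomm_ring

private lemma isNilpotent_swap {R : Type*} [Ring R] {a b : R}
    (h : IsNilpotent (a * b)) : IsNilpotent (b * a) := by
  obtain ⟨n, hn⟩ := h
  exact ⟨n + 1, by rw [pow_swap_aux a b n, hn, mul_zero, zero_mul]⟩

private lemma key_unit {R : Type*} [Ring R] (x y : R)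
    (hx : PrincipallyNilpotent x) (hy : PrincipallyNilpotent y)
    (s u t v : R) : IsUnit (1 + s * (x * u) + t * (y * v)) := by
  have hB : IsNilpotent (t * (y * v)) :=
    isNilpotent_swap (by simpa [mul_assoc] using hy (v * t))
  have hu : IsUnit (1 + t * (y * v)) := by
    simpa [sub_neg_eq_add] using hB.neg.isUnit_one_sub
  set w : R := ↑hu.unit⁻¹ with hwdef
  have hw1 : w * (1 + t * (y * v)) = 1 := by
    rw [hwdef]
    have h := hu.unit.inv_mul
    rwa [IsUnit.unit_spec hu] at h
  have hA : IsNilpotent (s * (x * (u * w))) :=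
    isNilpotent_swap (by simpa [mul_assoc] using hx (u * w * s))
  have h1 : IsUnit (1 + s * (x * (u * w))) := by
    simpa [sub_neg_eq_add] using hA.neg.isUnit_one_sub
  have hC : s * (x * (u * w)) * (1 + t * (y * v)) = s * (x * u) := by
    have : s * (x * (u * w)) * (1 + t * (y * v))
        = s * (x * (u * (w * (1 + t * (y * v))))) := by
      simp [mul_assoc]
    rw [this, hw1, mul_one]
  have hprod : (1 + s * (x * (u * w))) * (1 + t * (y * v))
      = 1 + s * (x * u) + t * (y * v) := by
    have expand : (1 + s * (x * (u * w))) * (1 + t * (y * v))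
        = 1 + t * (y * v) + s * (x * (u * w)) * (1 + t * (y * v)) := by
      noncomm_ring
    rw [expand, hC]
    abel
  exact hprod ▸ h1.mul hu

/-- An algebra over a field generated by two principally nilpotent elements is a
local ring whose Jacobson radical equals `xR + yR` and equals `Rx + Ry`. -/
theorem local_of_generated_by_principally_nilpotent {F R : Type*} [Field F]
    [Ring R] [Nontrivial R] [Algebra F R] (x y : R)
    (hx : PrincipallyNilpotent x) (hy : PrincipallyNilpotent y)
    (hgen : Algebra.adjoin F ({x, y} : Set R) = ⊤) :
    IsLocalRing R ∧
      (∀ r : R, r ∈ Ideal.jacobson (⊥ : Ideal R) ↔ ∃ s t : R, r = x * s + y * t) ∧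
      (∀ r : R, r ∈ Ideal.jacobson (⊥ : Ideal R) ↔ ∃ s t : R, r = s * x + t * y) := by
  -- Decomposition r = algebraMap c + x*s + y*t
  have hP : ∀ r : R, ∃ (c : F) (s t : R), r = algebraMap F R c + x * s + y * t := by
    intro r
    have hr : r ∈ Algebra.adjoin F ({x, y} : Set R) := hgen.symm ▸ trivial
    induction hr using Algebra.adjoin_induction with
    | mem z hz =>
      rcases hz with rfl | rfl
      · exact ⟨0, 1, 0, by simp⟩
      · exact ⟨0, 0, 1, by simp⟩
    | algebraMap c => exact ⟨c, 0, 0, by simp⟩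
    | add a b _ _ ha hb =>
      obtain ⟨c1, s1, t1, rfl⟩ := ha
      obtain ⟨c2, s2, t2, rfl⟩ := hb
      exact ⟨c1 + c2, s1 + s2, t1 + t2, by rw [map_add]; noncomm_ring⟩
    | mul a b _ _ ha hb =>
      obtain ⟨c1, s1, t1, rfl⟩ := ha
      obtain ⟨c2, s2, t2, rfl⟩ := hb
      refine ⟨c1 * c2, s1 * (algebraMap F R c2 + x * s2 + y * t2) + algebraMap F R c1 * s2,
        t1 * (algebraMap F R c2 + x * s2 + y * t2) + algebraMap F R c1 * t2, ?_⟩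
      have e1 : algebraMap F R c1 * (x * s2) = x * (algebraMap F R c1 * s2) := by
        rw [← mul_assoc, Algebra.commutes c1 x, mul_assoc]
      have e2 : algebraMap F R c1 * (y * t2) = y * (algebraMap F R c1 * t2) := by
        rw [← mul_assoc, Algebra.commutes c1 y, mul_assoc]
      rw [map_mul]
      calc (algebraMap F R c1 + x * s1 + y * t1) * (algebraMap F R c2 + x * s2 + y * t2)
          = algebraMap F R c1 * algebraMap F R c2
            + x * (s1 * (algebraMap F R c2 + x * s2 + y * t2))
            + y * (t1 * (algebraMap F R c2 + x * s2 + y * t2))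
            + algebraMap F R c1 * (x * s2) + algebraMap F R c1 * (y * t2) := by
            noncomm_ring
        _ = algebraMap F R c1 * algebraMap F R c2
            + x * (s1 * (algebraMap F R c2 + x * s2 + y * t2))
            + y * (t1 * (algebraMap F R c2 + x * s2 + y * t2))
            + x * (algebraMap F R c1 * s2) + y * (algebraMap F R c1 * t2) := by
            rw [e1, e2]
        _ = algebraMap F R c1 * algebraMap F R c2
            + x * (s1 * (algebraMap F R c2 + x * s2 + y * t2) + algebraMap F R c1 * s2)
            + y * (t1 * (algebraMap F R c2 + x * s2 + y * t2) + algebraMap F R c1 * t2) := by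
            noncomm_ring
  -- Decomposition r = algebraMap c + s*x + t*y
  have hQ : ∀ r : R, ∃ (c : F) (s t : R), r = algebraMap F R c + s * x + t * y := by
    intro r
    have hr : r ∈ Algebra.adjoin F ({x, y} : Set R) := hgen.symm ▸ trivial
    induction hr using Algebra.adjoin_induction with
    | mem z hz =>
      rcases hz with rfl | rfl
      · exact ⟨0, 1, 0, by simp⟩
      · exact ⟨0, 0, 1, by simp⟩
    | algebraMap c => exact ⟨c, 0, 0, by simp⟩
    | add a b _ _ ha hb =>
      obtain ⟨c1, s1, t1, rfl⟩ := ha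
      obtain ⟨c2, s2, t2, rfl⟩ := hb
      exact ⟨c1 + c2, s1 + s2, t1 + t2, by rw [map_add]; noncomm_ring⟩
    | mul a b _ _ ha hb =>
      obtain ⟨c1, s1, t1, rfl⟩ := ha
      obtain ⟨c2, s2, t2, rfl⟩ := hb
      refine ⟨c1 * c2, (algebraMap F R c1 + s1 * x + t1 * y) * s2 + s1 * algebraMap F R c2,
        (algebraMap F R c1 + s1 * x + t1 * y) * t2 + t1 * algebraMap F R c2, ?_⟩
      have e1 : s1 * (x * algebraMap F R c2) = (s1 * algebraMap F R c2) * x := by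
        rw [← Algebra.commutes c2 x, ← mul_assoc]
      have e2 : t1 * (y * algebraMap F R c2) = (t1 * algebraMap F R c2) * y := by
        rw [← Algebra.commutes c2 y, ← mul_assoc]
      rw [map_mul]
      calc (algebraMap F R c1 + s1 * x + t1 * y) * (algebraMap F R c2 + s2 * x + t2 * y)
          = algebraMap F R c1 * algebraMap F R c2
            + ((algebraMap F R c1 + s1 * x + t1 * y) * s2) * x
            + ((algebraMap F R c1 + s1 * x + t1 * y) * t2) * y
            + s1 * (x * algebraMap F R c2) + t1 * (y * algebraMap F R c2) := by
            noncomm_ring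
        _ = algebraMap F R c1 * algebraMap F R c2
            + ((algebraMap F R c1 + s1 * x + t1 * y) * s2) * x
            + ((algebraMap F R c1 + s1 * x + t1 * y) * t2) * y
            + (s1 * algebraMap F R c2) * x + (t1 * algebraMap F R c2) * y := by
            rw [e1, e2]
        _ = algebraMap F R c1 * algebraMap F R c2
            + ((algebraMap F R c1 + s1 * x + t1 * y) * s2 + s1 * algebraMap F R c2) * x
            + ((algebraMap F R c1 + s1 * x + t1 * y) * t2 + t1 * algebraMap F R c2) * y := by
            noncomm_ring
  have hkey := key_unit x y hx hy
  -- xR + yR ⊆ J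
  have hmemP : ∀ s t : R, x * s + y * t ∈ Ideal.jacobson (⊥ : Ideal R) := by
    intro s t
    rw [Ideal.mem_jacobson_iff]
    intro b
    have hU : IsUnit (b * (x * s + y * t) + 1) := by
      have h0 : b * (x * s + y * t) + 1 = 1 + b * (x * s) + b * (y * t) := by noncomm_ring
      rw [h0]; exact hkey b s b t
    refine ⟨↑hU.unit⁻¹, ?_⟩
    have h1 : (↑hU.unit⁻¹ : R) * (b * (x * s + y * t) + 1) = 1 := by
      have h := hU.unit.inv_mul
      rwa [IsUnit.unit_spec hU] at h
    have h2 : (↑hU.unit⁻¹ : R) * b * (x * s + y * t) + ↑hU.unit⁻¹ - 1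
        = (↑hU.unit⁻¹ : R) * (b * (x * s + y * t) + 1) - 1 := by noncomm_ring
    rw [Ideal.mem_bot, h2, h1, sub_self]
  -- Rx + Ry ⊆ J
  have hmemQ : ∀ s t : R, s * x + t * y ∈ Ideal.jacobson (⊥ : Ideal R) := by
    intro s t
    rw [Ideal.mem_jacobson_iff]
    intro b
    have hU : IsUnit (b * (s * x + t * y) + 1) := by
      have h0 : b * (s * x + t * y) + 1 = 1 + (b * s) * (x * 1) + (b * t) * (y * 1) := by
        noncomm_ring
      rw [h0]; exact hkey (b * s) 1 (b * t) 1
    refine ⟨↑hU.unit⁻¹, ?_⟩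
    have h1 : (↑hU.unit⁻¹ : R) * (b * (s * x + t * y) + 1) = 1 := by
      have h := hU.unit.inv_mul
      rwa [IsUnit.unit_spec hU] at h
    have h2 : (↑hU.unit⁻¹ : R) * b * (s * x + t * y) + ↑hU.unit⁻¹ - 1
        = (↑hU.unit⁻¹ : R) * (b * (s * x + t * y) + 1) - 1 := by noncomm_ring
    rw [Ideal.mem_bot, h2, h1, sub_self]
  -- 1 ∉ J
  have hone : (1 : R) ∉ Ideal.jacobson (⊥ : Ideal R) := by
    intro h1
    have : Ideal.jacobson (⊥ : Ideal R) = ⊤ := (Ideal.eq_top_iff_one _).mpr h1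
    rw [Ideal.jacobson_eq_top_iff] at this
    exact one_ne_zero (Ideal.mem_bot.mp (this ▸ Submodule.mem_top : (1 : R) ∈ (⊥ : Ideal R)))
  -- algebraMap c ∈ J → c = 0
  have hconst : ∀ c : F, algebraMap F R c ∈ Ideal.jacobson (⊥ : Ideal R) → c = 0 := by
    intro c hc
    by_contra hc0
    apply hone
    have : (1 : R) = algebraMap F R c⁻¹ * algebraMap F R c := by
      rw [← map_mul, inv_mul_cancel₀ hc0, map_one]
    rw [this]
    exact Ideal.mul_mem_left _ _ hc
  refine ⟨?_, ?_, ?_⟩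
  · -- local ring
    refine ⟨fun {a b} hab => ?_⟩
    obtain ⟨c, s, t, rfl⟩ := hP a
    by_cases hc : c = 0
    · right
      subst hc
      have hab' : x * s + y * t + b = 1 := by simpa using hab
      have hb : b = 1 + 1 * (x * (-s)) + 1 * (y * (-t)) := by
        have h2 : b = 1 - (x * s + y * t) := by
          rw [eq_sub_iff_add_eq, add_comm]; exact hab'
        rw [h2]; noncomm_ring
      rw [hb]
      exact hkey 1 (-s) 1 (-t)
    · left
      have hc1 : IsUnit (algebraMap F R c) :=
        (isUnit_iff_ne_zero.mpr hc).map (algebraMap F R)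
      have hfac : algebraMap F R c + x * s + y * t
          = algebraMap F R c * (1 + 1 * (x * (algebraMap F R c⁻¹ * s))
              + 1 * (y * (algebraMap F R c⁻¹ * t))) := by
        have hx' : algebraMap F R c * (x * (algebraMap F R c⁻¹ * s)) = x * s := by
          rw [← mul_assoc, Algebra.commutes c x, mul_assoc, ← mul_assoc
            (algebraMap F R c), ← map_mul, mul_inv_cancel₀ hc, map_one, one_mul]
        have hy' : algebraMap F R c * (y * (algebraMap F R c⁻¹ * t)) = y * t := by
          rw [← mul_assoc, Algebra.commutes c y, mul_assoc, ← mul_assoc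
            (algebraMap F R c), ← map_mul, mul_inv_cancel₀ hc, map_one, one_mul]
        rw [mul_add, mul_add, mul_one, one_mul, one_mul] at *
        rw [hx', hy']
      rw [hfac]
      exact hc1.mul (hkey 1 _ 1 _)
  · -- J = xR + yR
    intro r
    constructor
    · intro hr
      obtain ⟨c, s, t, rfl⟩ := hP r
      have hc : c = 0 := by
        apply hconst
        have : algebraMap F R c = (algebraMap F R c + x * s + y * t) - (x * s + y * t) := by
          noncomm_ring
        rw [this]
        exact Ideal.sub_mem _ hr (hmemP s t)
      subst hc
      exact ⟨s, t, by simp⟩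
    · rintro ⟨s, t, rfl⟩
      exact hmemP s t
  · -- J = Rx + Ry
    intro r
    constructor
    · intro hr
      obtain ⟨c, s, t, rfl⟩ := hQ r
      have hc : c = 0 := by
        apply hconst
        have : algebraMap F R c = (algebraMap F R c + s * x + t * y) - (s * x + t * y) := by
          noncomm_ring
        rw [this]
        exact Ideal.sub_mem _ hr (hmemQ s t)
      subst hc
      exact ⟨s, t, by simp⟩
    · rintro ⟨s, t, rfl⟩
      exact hmemQ s t
end

section
/- Let R be a ring satisfying condition (NK), i.e., there exist nil right ideals K, L of R with K + L not nil. Then there exist elements x ∈ K and y ∈ L such that x + y is not nilpotent, and in the subring S of R generated by x and y, both xS and yS are nil right ideals of S while x + y is not nilpotent in S. -/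
/-- A right ideal (an `Rᵐᵒᵖ`-submodule of `R`) is *nil* if all its elements are
nilpotent. -/
def IsNilRightIdeal {R : Type*} [Ring R] (I : Submodule Rᵐᵒᵖ R) : Prop :=
  ∀ x ∈ I, IsNilpotent x

/-- If `K`, `L` are nil right ideals of `R` with `K + L` not nil, then there are
`x ∈ K`, `y ∈ L` with `x + y` not nilpotent such that in the subring `S`
generated by `x` and `y`, the right ideals `xS` and `yS` are nil, while `x + y`
is not nilpotent. -/
theorem exists_two_generated_subring_NK {R : Type*} [Ring R]
    (K L : Submodule Rᵐᵒᵖ R) (hK : IsNilRightIdeal K) (hL : IsNilRightIdeal L)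
    (hKL : ¬ IsNilRightIdeal (K ⊔ L)) :
    ∃ x ∈ K, ∃ y ∈ L, ¬ IsNilpotent (x + y) ∧
      (∀ s ∈ Subring.closure ({x, y} : Set R),
        IsNilpotent (x * s) ∧ IsNilpotent (y * s)) := by
  simp only [IsNilRightIdeal, not_forall] at hKL
  obtain ⟨z, hz, hnz⟩ := hKL
  obtain ⟨x, hx, y, hy, rfl⟩ := Submodule.mem_sup.mp hz
  refine ⟨x, hx, y, hy, hnz, fun s _ => ?_⟩
  have h1 : x * s = MulOpposite.op s • x := by
    simp [MulOpposite.smul_eq_mul_unop]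
  have h2 : y * s = MulOpposite.op s • y := by
    simp [MulOpposite.smul_eq_mul_unop]
  exact ⟨h1 ▸ hK _ (K.smul_mem _ hx), h2 ▸ hL _ (L.smul_mem _ hy)⟩
end

section
/- Let R be a ring satisfying (NK) and suppose the subgroup of (R,+) generated by 1 is isomorphic to ℤ (i.e., R has characteristic 0 in the strong sense that n·1 ≠ 0 for all n ≥ 1). If moreover R is torsion-free as an abelian group, then there exists a ℚ-algebra A satisfying (NK) generated by two principally nilpotent elements. -/
/-- A ring satisfies condition (NK) if it contains two nil right ideals whose
sum is not nil. -/
def SatisfiesNK (R : Type*) [Ring R] : Prop :=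
  ∃ K L : Submodule Rᵐᵒᵖ R,
    IsNilRightIdeal K ∧ IsNilRightIdeal L ∧ ¬ IsNilRightIdeal (K ⊔ L)

/-- Auxiliary predicate: `A` is a `ℚ`-algebra satisfying (NK) generated by two
principally nilpotent elements. -/
def IsTwoGeneratedNKQAlgebra (A : Type) [Ring A] [Algebra ℚ A] : Prop :=
  ∃ x y : A, PrincipallyNilpotent x ∧ PrincipallyNilpotent y ∧
    Algebra.adjoin ℚ ({x, y} : Set A) = ⊤ ∧ SatisfiesNK A

open scoped TensorProduct

/-- In a `ℚ`-module, `ℕ`-torsion is trivial. -/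
lemma qmodule_torsionfree {M : Type*} [AddCommGroup M] [Module ℚ M]
    {n : ℕ} (hn : 0 < n) {x : M} (h : n • x = 0) : x = 0 := by
  have h' : ((n : ℚ)) • x = 0 := by rw [Nat.cast_smul_eq_nsmul]; exact h
  have hne : (n : ℚ) ≠ 0 := by positivity
  calc x = ((n:ℚ))⁻¹ • ((n:ℚ) • x) := by rw [smul_smul, inv_mul_cancel₀ hne, one_smul]
  _ = 0 := by rw [h', smul_zero]

set_option maxHeartbeats 1000000 in
/-- If a ring satisfying (NK) has `n·1 ≠ 0` for all `n ≥ 1` and is torsion-free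
as an abelian group, then there exists a `ℚ`-algebra satisfying (NK) generated
by two principally nilpotent elements. -/
theorem exists_Q_algebra_NK {R : Type*} [Ring R] (hNK : SatisfiesNK R)
    (hchar : ∀ n : ℕ, 1 ≤ n → (n : R) ≠ 0)
    (htf : ∀ (n : ℕ) (r : R), 1 ≤ n → n • r = 0 → r = 0) :
    ∃ (A : Type) (iA : Ring A) (jA : @Algebra ℚ A _ iA.toSemiring),
      @IsTwoGeneratedNKQAlgebra A iA jA := by
  classical
  obtain ⟨K, L, hK, hL, hKL⟩ := hNK
  rw [IsNilRightIdeal] at hKL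
  push_neg at hKL
  obtain ⟨x, hxmem, hxnil⟩ := hKL
  obtain ⟨a, haK, b, hbL, hab⟩ := Submodule.mem_sup.mp hxmem
  -- the subalgebra generated by `a` and `b`
  set f : Bool → R := fun t => bif t then a else b with hf
  have hrange : Set.range f = {a, b} := by
    ext r
    constructor
    · rintro ⟨t, rfl⟩; cases t
      · exact Or.inr rfl
      · exact Or.inl rfl
    · rintro (rfl | rfl)
      exacts [⟨true, rfl⟩, ⟨false, rfl⟩]
  set T : Subalgebra ℤ R := Algebra.adjoin ℤ ({a, b} : Set R) with hTdef
  have haT : a ∈ T := Algebra.subset_adjoin (by simp)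
  have hbT : b ∈ T := Algebra.subset_adjoin (by simp)
  have hTrange : T = (FreeAlgebra.lift ℤ f).range := by
    rw [hTdef, ← hrange, Algebra.adjoin_range_eq_range_freeAlgebra_lift]
  have hsmall : Small.{0} ↥T := by
    have h1 : Small.{0} ↥(Set.range ⇑(FreeAlgebra.lift ℤ f)) := small_range _
    have h2 : (T : Set R) = Set.range ⇑(FreeAlgebra.lift ℤ f) := by
      rw [hTrange]; rfl
    exact (small_congr (Equiv.setCongr h2)).mpr h1
  letI := hsmall
  let S₀ : Type := Shrink.{0} ↥T
  let e : S₀ ≃+* ↥T := Shrink.ringEquiv ↥T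
  let ι : S₀ →+* R := (Subalgebra.val T).toRingHom.comp (e : S₀ →+* ↥T)
  have hι_inj : Function.Injective ι := Subtype.coe_injective.comp e.injective
  -- torsion-freeness of S₀ over ℤ
  have htfR : ∀ (c : ℤ) (r : R), c ≠ 0 → c • r = 0 → r = 0 := by
    intro c r hc hcr
    rcases lt_trichotomy c 0 with h | h | h
    · refine htf (-c).toNat r ?_ ?_
      · omega
      · have : ((-c).toNat : ℤ) • r = 0 := by
          rw [Int.toNat_of_nonneg (by omega), neg_smul, hcr, neg_zero]
        rwa [natCast_zsmul] at this
    · exact absurd h hc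
    · refine htf c.toNat r ?_ ?_
      · omega
      · have : (c.toNat : ℤ) • r = 0 := by rw [Int.toNat_of_nonneg (by omega)]; exact hcr
        rwa [natCast_zsmul] at this
  have htf₀ : ∀ (c : ℤ) (s : S₀), c ≠ 0 → c • s = 0 → s = 0 := by
    intro c s hc hcs
    apply hι_inj
    rw [map_zero]
    refine htfR c (ι s) hc ?_
    rw [← map_zsmul ι, hcs, map_zero]
  -- nilpotency transfer
  have hnil₀ : ∀ s : S₀, IsNilpotent (ι s) → IsNilpotent s := by
    rintro s ⟨m, hm⟩
    exact ⟨m, hι_inj (by rw [map_pow, hm, map_zero])⟩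
  -- the algebra A
  refine ⟨ℚ ⊗[ℤ] S₀, inferInstance, inferInstance, ?_⟩
  let sa : S₀ := e.symm ⟨a, haT⟩
  let sb : S₀ := e.symm ⟨b, hbT⟩
  have hιa : ι sa = a := by
    show ((e (e.symm ⟨a, haT⟩) : ↥T) : R) = a
    rw [RingEquiv.apply_symm_apply]
  have hιb : ι sb = b := by
    show ((e (e.symm ⟨b, hbT⟩) : ↥T) : R) = b
    rw [RingEquiv.apply_symm_apply]
  -- clearing denominators
  have hclear : ∀ t : ℚ ⊗[ℤ] S₀, ∃ (n : ℕ) (s : S₀), 0 < n ∧ n • t = (1:ℚ) ⊗ₜ[ℤ] s := by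
    intro t
    induction t using TensorProduct.induction_on with
    | zero => exact ⟨1, 0, one_pos, by simp⟩
    | tmul q s =>
      refine ⟨q.den, q.num • s, q.den_pos, ?_⟩
      have h1 : (q.den : ℕ) • (q ⊗ₜ[ℤ] s) = ((q.den : ℤ) • q) ⊗ₜ[ℤ] s := by
        rw [← TensorProduct.smul_tmul', natCast_zsmul]
      have h2 : (q.den : ℤ) • q = (q.num : ℤ) • (1 : ℚ) := by
        have hd : (q.den : ℚ) ≠ 0 := Nat.cast_ne_zero.mpr q.den_nz
        rw [zsmul_eq_mul, zsmul_eq_mul, mul_one]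
        push_cast
        calc (q.den : ℚ) * q = (q.den : ℚ) * ((q.num : ℚ) / (q.den : ℚ)) := by
              rw [Rat.num_div_den]
          _ = (q.num : ℚ) := by field_simp
      rw [h1, h2, TensorProduct.smul_tmul]
    | add t₁ t₂ ih₁ ih₂ =>
      obtain ⟨n₁, s₁, hn₁, h₁⟩ := ih₁
      obtain ⟨n₂, s₂, hn₂, h₂⟩ := ih₂
      refine ⟨n₁ * n₂, n₂ • s₁ + n₁ • s₂, Nat.mul_pos hn₁ hn₂, ?_⟩
      have key : ∀ (m : ℕ) (u : S₀), m • ((1:ℚ) ⊗ₜ[ℤ] u) = (1:ℚ) ⊗ₜ[ℤ] (m • u) := by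
        intro m u
        rw [← natCast_zsmul, ← TensorProduct.tmul_smul, natCast_zsmul]
      rw [smul_add, mul_comm n₁ n₂, mul_smul, mul_comm n₂ n₁, mul_smul, h₁, h₂,
        key, key, ← TensorProduct.tmul_add]
  -- torsion-freeness of A
  have htfA : ∀ (n : ℕ) (t : ℚ ⊗[ℤ] S₀), 0 < n → n • t = 0 → t = 0 := by
    intro n t hn hnt
    exact qmodule_torsionfree hn hnt
  -- injectivity of s ↦ 1 ⊗ s
  haveI hloc : IsLocalizedModule (nonZeroDivisors ℤ) (TensorProduct.mk ℤ ℚ S₀ 1) :=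
    (isLocalizedModule_iff_isBaseChange (nonZeroDivisors ℤ) ℚ _).mpr
      (TensorProduct.isBaseChange ℤ S₀ ℚ)
  have hinj : ∀ s : S₀, (1:ℚ) ⊗ₜ[ℤ] s = (0 : ℚ ⊗[ℤ] S₀) → s = 0 := by
    intro s hs
    have hs' : TensorProduct.mk ℤ ℚ S₀ 1 s = 0 := hs
    obtain ⟨⟨c, hc⟩, hcs⟩ :=
      (IsLocalizedModule.eq_zero_iff (nonZeroDivisors ℤ) (TensorProduct.mk ℤ ℚ S₀ 1)).mp hs'
    exact htf₀ c s (nonZeroDivisors.ne_zero hc) hcs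
  -- principal nilpotency
  have hprin : ∀ c : S₀, (∀ s : S₀, IsNilpotent (ι c * ι s)) →
      PrincipallyNilpotent ((1:ℚ) ⊗ₜ[ℤ] c : ℚ ⊗[ℤ] S₀) := by
    intro c hc r
    obtain ⟨n, s, hn, hns⟩ := hclear r
    have h1 : n • (((1:ℚ) ⊗ₜ[ℤ] c : ℚ ⊗[ℤ] S₀) * r) = (1:ℚ) ⊗ₜ[ℤ] (c * s) := by
      rw [← mul_smul_comm, hns, Algebra.TensorProduct.tmul_mul_tmul, one_mul]
    obtain ⟨m, hm⟩ : IsNilpotent (c * s) := hnil₀ _ (by rw [map_mul]; exact hc s)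
    refine ⟨m, ?_⟩
    refine htfA (n ^ m) _ (pow_pos hn m) ?_
    rw [← smul_pow, h1, Algebra.TensorProduct.tmul_pow, one_pow, hm, TensorProduct.tmul_zero]
  have hpa : PrincipallyNilpotent ((1:ℚ) ⊗ₜ[ℤ] sa : ℚ ⊗[ℤ] S₀) := by
    refine hprin sa ?_
    intro s
    rw [hιa]
    have : a * ι s ∈ K := by
      have := K.smul_mem (MulOpposite.op (ι s)) haK
      rwa [op_smul_eq_mul] at this
    exact hK _ this
  have hpb : PrincipallyNilpotent ((1:ℚ) ⊗ₜ[ℤ] sb : ℚ ⊗[ℤ] S₀) := by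
    refine hprin sb ?_
    intro s
    rw [hιb]
    have : b * ι s ∈ L := by
      have := L.smul_mem (MulOpposite.op (ι s)) hbL
      rwa [op_smul_eq_mul] at this
    exact hL _ this
  -- non-nilpotency of the sum
  have hxab : ¬ IsNilpotent ((1:ℚ) ⊗ₜ[ℤ] (sa + sb) : ℚ ⊗[ℤ] S₀) := by
    rintro ⟨m, hm⟩
    apply hxnil
    rw [Algebra.TensorProduct.tmul_pow, one_pow] at hm
    have hsm : (sa + sb) ^ m = 0 := hinj _ hm
    refine ⟨m, ?_⟩
    rw [← hab]
    have : (a + b) ^ m = ι ((sa + sb) ^ m) := by rw [map_pow, map_add, hιa, hιb]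
    rw [this, hsm, map_zero]
  -- generation
  have hclosure : Subring.closure ({sa, sb} : Set S₀) = ⊤ := by
    rw [eq_top_iff]
    intro s _
    have h1 : ι s ∈ Subring.closure ({a, b} : Set R) := by
      have h0 : ι s ∈ Algebra.adjoin ℤ ({a, b} : Set R) := (e s).2
      rw [Algebra.adjoin_int] at h0
      exact h0
    have himg : ι '' ({sa, sb} : Set S₀) = ({a, b} : Set R) := by
      rw [Set.image_pair, hιa, hιb]
    have h2 : Subring.closure ({a, b} : Set R) = (Subring.closure ({sa, sb} : Set S₀)).map ι := by
      rw [RingHom.map_closure, himg]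
    rw [h2] at h1
    obtain ⟨u, hu, hus⟩ := h1
    rwa [← hι_inj hus]
  have hadj : Algebra.adjoin ℚ
      ({(1:ℚ) ⊗ₜ[ℤ] sa, (1:ℚ) ⊗ₜ[ℤ] sb} : Set (ℚ ⊗[ℤ] S₀)) = ⊤ := by
    rw [eq_top_iff]
    rintro t -
    obtain ⟨n, s, hn, hns⟩ := hclear t
    have h1 : t = ((n:ℚ))⁻¹ • ((1:ℚ) ⊗ₜ[ℤ] s : ℚ ⊗[ℤ] S₀) := by
      rw [← hns, ← Nat.cast_smul_eq_nsmul ℚ, smul_smul,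
        inv_mul_cancel₀ (by positivity : (n:ℚ) ≠ 0), one_smul]
    rw [h1]
    refine Subalgebra.smul_mem _ ?_ _
    have hle : Subring.closure ({sa, sb} : Set S₀) ≤
        (Subalgebra.toSubring (Algebra.adjoin ℚ
          ({(1:ℚ) ⊗ₜ[ℤ] sa, (1:ℚ) ⊗ₜ[ℤ] sb} : Set (ℚ ⊗[ℤ] S₀)))).comap
          (Algebra.TensorProduct.includeRight : S₀ →ₐ[ℤ] ℚ ⊗[ℤ] S₀).toRingHom := by
      refine Subring.closure_le.mpr ?_
      rintro u (rfl | rfl)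
      · exact Algebra.subset_adjoin (Or.inl rfl)
      · exact Algebra.subset_adjoin (Or.inr rfl)
    have hs : s ∈ Subring.closure ({sa, sb} : Set S₀) := by
      rw [hclosure]; exact Subring.mem_top s
    exact hle hs
  refine ⟨(1:ℚ) ⊗ₜ[ℤ] sa, (1:ℚ) ⊗ₜ[ℤ] sb, hpa, hpb, hadj, ?_⟩
  refine ⟨Submodule.span ((ℚ ⊗[ℤ] S₀)ᵐᵒᵖ) {(1:ℚ) ⊗ₜ[ℤ] sa}, Submodule.span ((ℚ ⊗[ℤ] S₀)ᵐᵒᵖ) {(1:ℚ) ⊗ₜ[ℤ] sb}, ?_, ?_, ?_⟩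
  · intro z hz
    obtain ⟨c, rfl⟩ := Submodule.mem_span_singleton.mp hz
    rw [MulOpposite.smul_eq_mul_unop]
    exact hpa c.unop
  · intro z hz
    obtain ⟨c, rfl⟩ := Submodule.mem_span_singleton.mp hz
    rw [MulOpposite.smul_eq_mul_unop]
    exact hpb c.unop
  · intro hnil
    refine hxab ?_
    have hmem := Submodule.add_mem_sup
      (Submodule.mem_span_singleton_self (R := (ℚ ⊗[ℤ] S₀)ᵐᵒᵖ) ((1:ℚ) ⊗ₜ[ℤ] sa))
      (Submodule.mem_span_singleton_self (R := (ℚ ⊗[ℤ] S₀)ᵐᵒᵖ) ((1:ℚ) ⊗ₜ[ℤ] sb))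
    have := hnil _ hmem
    rwa [← TensorProduct.tmul_add] at this
end

section
/- Let Q be a ring satisfying the ascending chain condition on right annihilators and on left annihilators, and let R be a subring of Q. Then every nil right ideal of R is nilpotent. -/
namespace HersteinSmallAux

variable {Q : Type*} [Ring Q]

/-- Left annihilator of a set. -/
def lA (S : Set Q) : Set Q := {x : Q | ∀ s ∈ S, x * s = 0}

lemma lA_anti {S T : Set Q} (h : S ⊆ T) : lA T ⊆ lA S := fun _x hx s hs => hx s (h hs)

/-- ACC on left annihilators, in the form used in the main statement. -/
def ACCl (Q : Type*) [Ring Q] : Prop :=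
  ∀ c : ℕ → Set Q, (∀ n, ∃ S : Set Q, c n = {x : Q | ∀ s ∈ S, x * s = 0}) →
    Monotone c → ∃ n, ∀ m, n ≤ m → c m = c n

lemma acc_no_strict_chain (hL : ACCl Q) (c : ℕ → Set Q)
    (hann : ∀ n, ∃ S : Set Q, c n = lA S)
    (hmono : ∀ n, c n ⊆ c (n + 1))
    (hstrict : ∀ n, c n ≠ c (n + 1)) : False := by
  obtain ⟨n, hn⟩ := hL c (fun n => hann n) (monotone_nat_of_le_succ hmono)
  exact hstrict n (hn (n + 1) (Nat.le_succ n)).symm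

/-- In the presence of the ACC, every nonempty family of left annihilators has a
maximal element. -/
lemma exists_maximal (hL : ACCl Q) (F : Set (Set Q))
    (hann : ∀ T ∈ F, ∃ S : Set Q, T = lA S) (hne : F.Nonempty) :
    ∃ M ∈ F, ∀ T ∈ F, M ⊆ T → T = M := by
  by_contra hcon
  push_neg at hcon
  have hstep : ∀ x : {T : Set Q // T ∈ F}, ∃ y : {T : Set Q // T ∈ F},
      x.1 ⊆ y.1 ∧ y.1 ≠ x.1 := by
    rintro ⟨T, hT⟩
    obtain ⟨T', hT', hsub, hne'⟩ := hcon T hT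
    exact ⟨⟨T', hT'⟩, hsub, hne'⟩
  choose g hg1 hg2 using hstep
  obtain ⟨T₀, hT₀⟩ := hne
  let c : ℕ → {T : Set Q // T ∈ F} := fun n => g^[n] ⟨T₀, hT₀⟩
  have hcsucc : ∀ n, c (n + 1) = g (c n) := fun n => Function.iterate_succ_apply' g n _
  refine acc_no_strict_chain hL (fun n => (c n).1)
    (fun n => hann _ (c n).2) (fun n => ?_) (fun n => ?_)
  · show (c n).1 ⊆ (c (n + 1)).1
    rw [hcsucc]; exact hg1 _
  · show (c n).1 ≠ (c (n + 1)).1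
    rw [hcsucc]; exact fun h => hg2 (c n) h.symm

/-- The set `τ · A · W`. -/
def SS (A : Set Q) (τ : Q) (W : Set Q) : Set Q :=
  {u : Q | ∃ b ∈ A, ∃ w ∈ W, u = τ * (b * w)}

/-- The set `A · W`. -/
def AV (A : Set Q) (W : Set Q) : Set Q := {v : Q | ∃ a ∈ A, ∃ w ∈ W, v = a * w}

/-- `A·W ≠ 0`. -/
def Alv (A : Set Q) (W : Set Q) : Prop := ∃ a ∈ A, ∃ w ∈ W, a * w ≠ 0

/-- The main engine: a multiplicatively closed set of nilpotent elements whose right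
annihilator "stabilizes" (expressed by `hPeel`) and with some nonzero product leads to an
infinite strictly increasing chain of left annihilators, contradicting the ACC. -/
lemma engine (hL : ACCl Q) (A : Set Q)
    (hmul : ∀ x ∈ A, ∀ y ∈ A, x * y ∈ A)
    (hnil : ∀ x ∈ A, ∃ m : ℕ, x ^ (m + 1) = 0)
    (hPeel : ∀ w : Q, (∀ x ∈ A, ∀ y ∈ A, ∀ z ∈ A, x * (y * (z * w)) = 0) →
      ∀ a ∈ A, a * w = 0)
    (h0 : Alv A A) : False := by
  classical
  -- Step lemma: from any "alive" W produce τ with τ·A·W alive but with the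
  -- Levitzki-type death property for τ·z·τ.
  have step : ∀ W : Set Q, Alv A W →
      ∃ τ, τ ∈ A ∧ Alv A (SS A τ W) ∧
        ∀ z ∈ A, ∀ v ∈ SS A (τ * (z * τ)) W, ∀ a ∈ A, a * v = 0 := by
    intro W hW
    obtain ⟨a₀, ha₀, w₀, hw₀, hne₀⟩ := hW
    -- the family is nonempty
    have hfne : ∃ τ ∈ A, Alv A (SS A τ W) := by
      by_contra hcon
      push_neg at hcon
      have h3 : ∀ x ∈ A, ∀ y ∈ A, ∀ z ∈ A, x * (y * (z * w₀)) = 0 := by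
        intro x hx y hy z hz
        by_contra hne'
        exact hcon y hy ⟨x, hx, y * (z * w₀), ⟨z, hz, w₀, hw₀, rfl⟩, hne'⟩
      exact hne₀ (hPeel w₀ h3 a₀ ha₀)
    -- choose τ with maximal left annihilator of τ·A·W
    obtain ⟨M, hMF, hMmax⟩ := exists_maximal hL
      {T | ∃ τ ∈ A, Alv A (SS A τ W) ∧ T = lA (SS A τ W)}
      (by rintro T ⟨τ, hτ, _, rfl⟩; exact ⟨_, rfl⟩)
      (by obtain ⟨τ, hτ, hAlv⟩ := hfne; exact ⟨_, ⟨τ, hτ, hAlv, rfl⟩⟩)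
    obtain ⟨τ, hτA, hτAlv, rfl⟩ := hMF
    refine ⟨τ, hτA, hτAlv, ?_⟩
    by_contra hdead
    push_neg at hdead
    obtain ⟨z, hz, v, hv, a, ha, hav⟩ := hdead
    have hτ'A : τ * (z * τ) ∈ A := hmul τ hτA _ (hmul z hz τ hτA)
    have hAlv' : Alv A (SS A (τ * (z * τ)) W) := ⟨a, ha, v, hv, hav⟩
    have hsub : SS A (τ * (z * τ)) W ⊆ SS A τ W := by
      rintro u ⟨b, hb, w, hw, rfl⟩
      exact ⟨z * (τ * b), hmul z hz _ (hmul τ hτA b hb), w, hw, by simp only [mul_assoc]⟩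
    have hEq : lA (SS A (τ * (z * τ)) W) = lA (SS A τ W) :=
      hMmax _ ⟨τ * (z * τ), hτ'A, hAlv', rfl⟩ (lA_anti hsub)
    -- σ-descent
    obtain ⟨m, hm⟩ := hnil (τ * z) (hmul τ hτA z hz)
    have desc : ∀ j s, m + 1 ≤ s + j → ∀ u ∈ SS A τ W, (τ * z) ^ s * u = 0 := by
      intro j
      induction j with
      | zero =>
        intro s hs u _
        have hσ : (τ * z) ^ s = 0 := by
          have h1 : (τ * z) ^ s = (τ * z) ^ (m + 1) * (τ * z) ^ (s - (m + 1)) := by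
            rw [← pow_add]; congr 1; omega
          rw [h1, hm, zero_mul]
        rw [hσ, zero_mul]
      | succ j ih =>
        intro s hs u hu
        have hmem : (τ * z) ^ s ∈ lA (SS A (τ * (z * τ)) W) := by
          rintro v' ⟨b, hb, w, hw, rfl⟩
          have h1 : τ * (b * w) ∈ SS A τ W := ⟨b, hb, w, hw, rfl⟩
          have h2 : (τ * z) ^ (s + 1) * (τ * (b * w)) = 0 := ih (s + 1) (by omega) _ h1
          calc (τ * z) ^ s * (τ * (z * τ) * (b * w))
              = (τ * z) ^ (s + 1) * (τ * (b * w)) := by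
                simp only [pow_succ, mul_assoc]
            _ = 0 := h2
        rw [hEq] at hmem
        exact hmem u hu
    obtain ⟨a', _, u, hu, hne'⟩ := hτAlv
    have hu0 := desc (m + 1) 0 (by omega) u hu
    rw [pow_zero, one_mul] at hu0
    rw [hu0, mul_zero] at hne'
    exact hne' rfl
  -- iterate the step lemma
  have hsteps : ∀ x : {W : Set Q // Alv A W},
      ∃ τ : Q, τ ∈ A ∧ Alv A (SS A τ x.1) ∧
        ∀ z ∈ A, ∀ v ∈ SS A (τ * (z * τ)) x.1, ∀ a ∈ A, a * v = 0 :=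
    fun x => step x.1 x.2
  choose tf htfA htfAlv htfDead using hsteps
  let sq : ℕ → {W : Set Q // Alv A W} := fun n =>
    Nat.rec ⟨A, h0⟩ (fun _ x => ⟨SS A (tf x) x.1, htfAlv x⟩) n
  have hsqv : ∀ n, (sq (n + 1)).1 = SS A (tf (sq n)) (sq n).1 := fun n => rfl
  -- the strictly increasing chain of left annihilators
  refine acc_no_strict_chain hL (fun n => lA (AV A (sq n).1))
    (fun n => ⟨_, rfl⟩) (fun n => ?_) (fun n => ?_)
  · -- monotone
    apply lA_anti
    rw [hsqv]
    rintro v' ⟨a, ha, u, hu, rfl⟩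
    obtain ⟨b, hb, w, hw, rfl⟩ := hu
    exact ⟨a * (tf (sq n) * b), hmul a ha _ (hmul _ (htfA _) b hb), w, hw,
      by simp only [mul_assoc]⟩
  · -- strict
    intro heq
    have heq' : lA (AV A (sq n).1) = lA (AV A (sq (n + 1)).1) := heq
    obtain ⟨a, ha, u, hu, hne'⟩ := htfAlv (sq n)
    obtain ⟨b, hb, w, hw, rfl⟩ := hu
    have htin : (a * tf (sq n)) ∈ lA (AV A (sq (n + 1)).1) := by
      rw [hsqv]
      rintro v' ⟨a', ha', u', hu', rfl⟩
      obtain ⟨b', hb', w', hw', rfl⟩ := hu'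
      have hv₂ : (tf (sq n) * (a' * tf (sq n))) * (b' * w')
          ∈ SS A (tf (sq n) * (a' * tf (sq n))) (sq n).1 := ⟨b', hb', w', hw', rfl⟩
      have hdead := htfDead (sq n) a' ha' _ hv₂ a ha
      calc (a * tf (sq n)) * (a' * (tf (sq n) * (b' * w')))
          = a * ((tf (sq n) * (a' * tf (sq n))) * (b' * w')) := by simp only [mul_assoc]
        _ = 0 := hdead
    rw [← heq'] at htin
    have hbw : b * w ∈ AV A (sq n).1 := ⟨b, hb, w, hw, rfl⟩
    have h0' : (a * tf (sq n)) * (b * w) = 0 := htin _ hbw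
    rw [mul_assoc] at h0'
    exact hne' h0'

/-- Sets of products of `n+1` elements of `NN`. -/
def PS (NN : Set Q) : ℕ → Set Q
  | 0 => NN
  | (n + 1) => {z : Q | ∃ x ∈ NN, ∃ y ∈ PS NN n, z = x * y}

variable {NN : Set Q}

lemma PS_absorb (hmulNN : ∀ x ∈ NN, ∀ y ∈ NN, x * y ∈ NN) :
    ∀ n, ∀ x ∈ NN, ∀ y ∈ PS NN n, x * y ∈ PS NN n := by
  intro n
  induction n with
  | zero => exact hmulNN
  | succ n _ =>
    rintro x hx z ⟨p, hp, q, hq, rfl⟩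
    exact ⟨x * p, hmulNN x hx p hp, q, hq, by rw [mul_assoc]⟩

lemma PS_subset (hmulNN : ∀ x ∈ NN, ∀ y ∈ NN, x * y ∈ NN) :
    ∀ n, PS NN n ⊆ NN := by
  intro n
  induction n with
  | zero => exact fun _ h => h
  | succ n ih =>
    rintro z ⟨x, hx, y, hy, rfl⟩
    exact hmulNN x hx y (ih hy)

lemma PS_succ_sub (hmulNN : ∀ x ∈ NN, ∀ y ∈ NN, x * y ∈ NN) (n : ℕ) :
    PS NN (n + 1) ⊆ PS NN n := by
  rintro z ⟨x, hx, y, hy, rfl⟩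
  exact PS_absorb hmulNN n x hx y hy

lemma PS_split : ∀ i j, ∀ z ∈ PS NN (i + j + 1), ∃ x ∈ PS NN i, ∃ y ∈ PS NN j, z = x * y := by
  intro i
  induction i with
  | zero =>
    intro j z hz
    rw [Nat.zero_add] at hz
    obtain ⟨x, hx, y, hy, rfl⟩ := hz
    exact ⟨x, hx, y, hy, rfl⟩
  | succ i ih =>
    intro j z hz
    have hz' : z ∈ PS NN ((i + j + 1) + 1) := by
      have : i + 1 + j + 1 = (i + j + 1) + 1 := by omega
      rwa [this] at hz
    obtain ⟨p, hp, v, hv, rfl⟩ := hz'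
    obtain ⟨x, hx, y, hy, rfl⟩ := ih j v hv
    exact ⟨p * x, ⟨p, hp, x, hx, rfl⟩, y, hy, by rw [mul_assoc]⟩

lemma PS_mul : ∀ i j, ∀ x ∈ PS NN i, ∀ y ∈ PS NN j, x * y ∈ PS NN (i + j + 1) := by
  intro i
  induction i with
  | zero =>
    intro j x hx y hy
    rw [Nat.zero_add]
    exact ⟨x, hx, y, hy, rfl⟩
  | succ i ih =>
    intro j x hx y hy
    obtain ⟨p, hp, q, hq, rfl⟩ := hx
    have h1 : q * y ∈ PS NN (i + j + 1) := ih j q hq y hy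
    have h2 : p * (q * y) ∈ PS NN ((i + j + 1) + 1) := ⟨p, hp, q * y, h1, rfl⟩
    have harith : (i + j + 1) + 1 = i + 1 + j + 1 := by omega
    rw [harith, ← mul_assoc] at h2
    exact h2

end HersteinSmallAux

open HersteinSmallAux in
/-- If `Q` satisfies the ACC on right annihilators and on left annihilators,
then every nil right ideal of a subring `R` of `Q` is nilpotent. -/
theorem nil_right_ideal_nilpotent_of_acc_annihilators {Q : Type*} [Ring Q]
    (hR : ∀ c : ℕ → Set Q, (∀ n, ∃ S : Set Q, c n = {x : Q | ∀ s ∈ S, s * x = 0}) →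
      Monotone c → ∃ n, ∀ m, n ≤ m → c m = c n)
    (hL : ∀ c : ℕ → Set Q, (∀ n, ∃ S : Set Q, c n = {x : Q | ∀ s ∈ S, x * s = 0}) →
      Monotone c → ∃ n, ∀ m, n ≤ m → c m = c n)
    (R : Subring Q) (I : Submodule (↥R)ᵐᵒᵖ ↥R) (hI : ∀ x ∈ I, IsNilpotent x) :
    ∃ n : ℕ, 0 < n ∧ ∀ f : Fin n → ↥R, (∀ i, f i ∈ I) → (List.ofFn f).prod = 0 := by
  classical
  set NN : Set Q := {x : Q | ∃ y : ↥R, y ∈ I ∧ (y : Q) = x} with hNNdef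
  have hmulNN : ∀ x ∈ NN, ∀ y ∈ NN, x * y ∈ NN := by
    rintro x ⟨a, ha, rfl⟩ y ⟨b, hb, rfl⟩
    refine ⟨a * b, ?_, rfl⟩
    have hab : a * b = (MulOpposite.op b) • a := rfl
    rw [hab]
    exact I.smul_mem _ ha
  have hnilNN : ∀ x ∈ NN, ∃ m : ℕ, x ^ (m + 1) = 0 := by
    rintro x ⟨a, ha, rfl⟩
    obtain ⟨n, hn⟩ := hI a ha
    refine ⟨n, ?_⟩
    have h1 : a ^ (n + 1) = 0 := by rw [pow_succ, hn, zero_mul]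
    calc ((a : Q)) ^ (n + 1) = ((a ^ (n + 1) : ↥R) : Q) := by push_cast; ring
      _ = ((0 : ↥R) : Q) := by rw [h1]
      _ = 0 := by simp
  -- stabilize the chain of right annihilators of powers
  have hrmono : Monotone (fun k => {x : Q | ∀ s ∈ PS NN k, s * x = 0}) := by
    apply monotone_nat_of_le_succ
    intro k x hx s hs
    exact hx s (PS_succ_sub hmulNN k hs)
  obtain ⟨k₀, hk₀⟩ := hR (fun k => {x : Q | ∀ s ∈ PS NN k, s * x = 0})
    (fun n => ⟨PS NN n, rfl⟩) hrmono
  set A : Set Q := PS NN k₀ with hAdef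
  have hmulA : ∀ x ∈ A, ∀ y ∈ A, x * y ∈ A := fun x hx y hy =>
    PS_absorb hmulNN k₀ x (PS_subset hmulNN k₀ hx) y hy
  have hnilA : ∀ x ∈ A, ∃ m : ℕ, x ^ (m + 1) = 0 := fun x hx =>
    hnilNN x (PS_subset hmulNN k₀ hx)
  have hPeel : ∀ w : Q, (∀ x ∈ A, ∀ y ∈ A, ∀ z ∈ A, x * (y * (z * w)) = 0) →
      ∀ a ∈ A, a * w = 0 := by
    intro w h a ha
    have hw : ∀ s ∈ PS NN (k₀ + (k₀ + k₀ + 1) + 1), s * w = 0 := by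
      intro s hs
      obtain ⟨x, hx, v, hv, rfl⟩ := PS_split k₀ (k₀ + k₀ + 1) s hs
      obtain ⟨y, hy, z, hz, rfl⟩ := PS_split k₀ k₀ v hv
      calc (x * (y * z)) * w = x * (y * (z * w)) := by simp only [mul_assoc]
        _ = 0 := h x hx y hy z hz
    have h1 := hk₀ (k₀ + (k₀ + k₀ + 1) + 1) (by omega)
    have hw' : w ∈ {x : Q | ∀ s ∈ PS NN (k₀ + (k₀ + k₀ + 1) + 1), s * x = 0} := hw
    rw [h1] at hw'
    exact hw' a ha
  by_cases h0 : ∃ a ∈ A, ∃ b ∈ A, a * b ≠ 0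
  · exact absurd h0 (fun h => engine hL A hmulA hnilA hPeel h)
  · push_neg at h0
    refine ⟨k₀ + k₀ + 1 + 1, by omega, ?_⟩
    intro f hf
    -- the product of n+1 elements of I lands in PS NN n
    have hprod : ∀ n : ℕ, ∀ f : Fin (n + 1) → ↥R, (∀ i, f i ∈ I) →
        ((List.ofFn f).prod : Q) ∈ PS NN n := by
      intro n
      induction n with
      | zero =>
        intro f hf
        have : List.ofFn f = [f 0] := by
          rw [List.ofFn_succ]
          simp
        rw [this, List.prod_singleton]
        exact ⟨f 0, hf 0, rfl⟩
      | succ n ih =>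
        intro f hf
        rw [List.ofFn_succ, List.prod_cons]
        have h1 : ((f 0 * (List.ofFn fun i => f i.succ).prod : ↥R) : Q)
            = ((f 0 : ↥R) : Q) * (((List.ofFn fun i => f i.succ).prod : ↥R) : Q) := by
          push_cast; ring
        rw [h1]
        exact ⟨(f 0 : Q), ⟨f 0, hf 0, rfl⟩, _, ih (fun i => f i.succ) (fun i => hf i.succ), rfl⟩
    have hmem : ((List.ofFn f).prod : Q) ∈ PS NN (k₀ + k₀ + 1) :=
      hprod (k₀ + k₀ + 1) f hf
    obtain ⟨x, hx, y, hy, heq⟩ := PS_split k₀ k₀ _ hmem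
    have hz : ((List.ofFn f).prod : Q) = 0 := by rw [heq]; exact h0 x hx y hy
    exact (ZeroMemClass.coe_eq_zero).mp hz
end

section
/- Let F be a field and A an F-algebra which is prime and satisfies (NK). Then there exists a maximal ideal M of some von Neumann regular extension R' of A with M ∩ A = 0, such that A embeds into the prime von Neumann regular ring R'/M and every nonzero ideal of R'/M meets the image of A nontrivially. -/
/-- A ring is von Neumann regular if for every `x` there is `y` with `x = x*y*x`. -/
def IsVNRRing (R : Type*) [Ring R] : Prop :=
  ∀ x : R, ∃ y : R, x = x * y * x

/-- A ring is prime if the product of any two nonzero two-sided ideals is nonzero. -/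
def IsPrimeRingIdeal (R : Type*) [Ring R] : Prop :=
  ∀ I J : TwoSidedIdeal R, I ≠ ⊥ → J ≠ ⊥ → ∃ a ∈ I, ∃ b ∈ J, a * b ≠ 0

/-- `R'` is a von Neumann regular `F`-algebra extension of `A` carrying an ideal
`M`, maximal with respect to `M ∩ A = 0`, such that the quotient `R'/M` is prime
(phrased via the correspondence: ideals of `R'/M` are ideals of `R'` properly
containing `M`) and every nonzero ideal of `R'/M` meets the image of `A`
nontrivially. -/
def GoodVNRExtension (F : Type) [Field F] (A : Type) [Ring A] [Algebra F A]
    (R' : Type) [Ring R'] [Algebra F R'] : Prop :=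
  IsVNRRing R' ∧ ∃ (ι : A →ₐ[F] R') (M : TwoSidedIdeal R'),
    Function.Injective ι ∧
    -- `M ∩ A = 0`, so `A` embeds into `R'/M`:
    (∀ a : A, ι a ∈ M → a = 0) ∧
    -- `M` is maximal with respect to `M ∩ A = 0`:
    (∀ N : TwoSidedIdeal R', M ≤ N → (∀ a : A, ι a ∈ N → a = 0) → N = M) ∧
    -- the quotient `R'/M` is a prime ring:
    (∀ I J : TwoSidedIdeal R', M < I → M < J → ∃ x ∈ I, ∃ y ∈ J, x * y ∉ M) ∧
    -- every nonzero ideal of `R'/M` meets the image of `A` nontrivially: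
    (∀ J : TwoSidedIdeal R', M < J → ∃ a : A, ι a ∈ J ∧ ι a ∉ M)

/-- The endomorphism ring of a vector space is von Neumann regular. -/
lemma isVNR_end (F : Type*) [Field F] (V : Type*) [AddCommGroup V] [Module F V] :
    IsVNRRing (Module.End F V) := by
  intro f
  obtain ⟨q, hq⟩ := (LinearMap.range f).exists_isCompl
  obtain ⟨g, hg⟩ := f.rangeRestrict.exists_rightInverse_of_surjective
    (LinearMap.range_rangeRestrict f)
  refine ⟨g ∘ₗ (LinearMap.range f).linearProjOfIsCompl q hq, ?_⟩
  ext a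
  have h1 : (LinearMap.range f).linearProjOfIsCompl q hq (f a)
      = ⟨f a, LinearMap.mem_range_self f a⟩ :=
    Submodule.linearProjOfIsCompl_apply_left hq ⟨f a, LinearMap.mem_range_self f a⟩
  have h2 : f.rangeRestrict (g ⟨f a, LinearMap.mem_range_self f a⟩)
      = ⟨f a, LinearMap.mem_range_self f a⟩ := by
    rw [← LinearMap.comp_apply, hg]; rfl
  have h2' : f (g ⟨f a, LinearMap.mem_range_self f a⟩) = f a :=
    congrArg Subtype.val h2
  simp only [Module.End.mul_apply, LinearMap.comp_apply]
  rw [h1, h2']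

/-- Zorn: there is an ideal maximal with respect to being disjoint from the image of `ι`. -/
lemma exists_maximal_disjoint {A R' : Type*} [Ring A] [Ring R'] (ι : A →+* R')
    (hι : Function.Injective ι) :
    ∃ M : TwoSidedIdeal R', (∀ a : A, ι a ∈ M → a = 0) ∧
      ∀ N : TwoSidedIdeal R', M ≤ N → (∀ a : A, ι a ∈ N → a = 0) → N = M := by
  set s : Set (TwoSidedIdeal R') := {N | ∀ a : A, ι a ∈ N → a = 0} with hs
  have hbot : (⊥ : TwoSidedIdeal R') ∈ s := by
    intro a ha
    exact hι (by simpa using ha)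
  have hchain : ∀ c ⊆ s, IsChain (· ≤ ·) c → ∀ y ∈ c,
      ∃ ub ∈ s, ∀ z ∈ c, z ≤ ub := by
    intro c hcs hc y hy
    -- the union of a nonempty chain of two-sided ideals is a two-sided ideal
    have hne : c.Nonempty := ⟨y, hy⟩
    set U : Set R' := ⋃ N ∈ c, (N : Set R') with hU
    have hmem : ∀ {x : R'}, x ∈ U ↔ ∃ N ∈ c, x ∈ N := by
      intro x; simp [hU]
    have h2 : ∀ {x z : R'}, x ∈ U → z ∈ U → ∃ N ∈ c, x ∈ N ∧ z ∈ N := by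
      intro x z hx hz
      obtain ⟨N₁, hN₁, hx⟩ := hmem.1 hx
      obtain ⟨N₂, hN₂, hz⟩ := hmem.1 hz
      rcases hc.total hN₁ hN₂ with h | h
      · exact ⟨N₂, hN₂, h hx, hz⟩
      · exact ⟨N₁, hN₁, hx, h hz⟩
    refine ⟨TwoSidedIdeal.mk' U ?_ ?_ ?_ ?_ ?_, ?_, ?_⟩
    · exact hmem.2 ⟨y, hy, TwoSidedIdeal.zero_mem y⟩
    · intro a b ha hb
      obtain ⟨N, hN, ha, hb⟩ := h2 ha hb
      exact hmem.2 ⟨N, hN, TwoSidedIdeal.add_mem N ha hb⟩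
    · intro a ha
      obtain ⟨N, hN, ha⟩ := hmem.1 ha
      exact hmem.2 ⟨N, hN, TwoSidedIdeal.neg_mem N ha⟩
    · intro a b hb
      obtain ⟨N, hN, hb⟩ := hmem.1 hb
      exact hmem.2 ⟨N, hN, TwoSidedIdeal.mul_mem_left N _ _ hb⟩
    · intro a b ha
      obtain ⟨N, hN, ha⟩ := hmem.1 ha
      exact hmem.2 ⟨N, hN, TwoSidedIdeal.mul_mem_right N _ _ ha⟩
    · intro a ha
      rw [TwoSidedIdeal.mem_mk'] at ha
      obtain ⟨N, hN, ha⟩ := hmem.1 ha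
      exact hcs hN a ha
    · intro N hN
      rw [TwoSidedIdeal.le_iff, TwoSidedIdeal.coe_mk']
      intro x hx
      exact hmem.2 ⟨N, hN, hx⟩
  obtain ⟨M, _, hMs, hMmax⟩ := zorn_le_nonempty₀ s hchain ⊥ hbot
  exact ⟨M, hMs, fun N hMN hNs => le_antisymm (hMmax hNs hMN) hMN⟩

/-- Every prime algebra over a field satisfying (NK) admits a von Neumann
regular extension `R'` with an ideal `M` maximal with respect to `M ∩ A = 0`
such that `A` embeds into the prime von Neumann regular ring `R'/M` and every
nonzero ideal of `R'/M` meets the image of `A` nontrivially. -/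
theorem exists_good_VNR_extension (F : Type) [Field F] (A : Type) [Ring A]
    [Algebra F A] (hprime : IsPrimeRingIdeal A) (hNK : SatisfiesNK A) :
    ∃ (R' : Type) (iR : Ring R') (jR : @Algebra F R' _ iR.toSemiring),
      @GoodVNRExtension F _ A _ _ R' iR jR := by
  refine ⟨Module.End F A, inferInstance, inferInstance, isVNR_end F A, ?_⟩
  set ι : A →ₐ[F] Module.End F A := Algebra.lmul F A with hιdef
  have hι : Function.Injective ι := Algebra.lmul_injective
  obtain ⟨M, hMdisj, hMmax⟩ := exists_maximal_disjoint (ι : A →+* Module.End F A) hι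
  refine ⟨ι, M, hι, hMdisj, hMmax, ?_, ?_⟩
  · -- primality of the quotient
    intro I J hMI hMJ
    -- larger ideals must meet the image of A nontrivially, by maximality of M
    have key : ∀ K : TwoSidedIdeal (Module.End F A), M < K →
        ∃ a : A, a ≠ 0 ∧ ι a ∈ K := by
      intro K hK
      by_contra h
      push_neg at h
      exact hK.ne' (hMmax K hK.le fun a ha => by
        by_contra ha0; exact ha0 (h a ha0 |>.elim ha))
    obtain ⟨a, ha0, haI⟩ := key I hMI
    obtain ⟨b, hb0, hbJ⟩ := key J hMJ
    -- pull back to two-sided ideals of A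
    have hIc : (TwoSidedIdeal.comap (ι : A →+* Module.End F A) I : TwoSidedIdeal A) ≠ ⊥ := by
      intro h
      apply ha0
      have : a ∈ TwoSidedIdeal.comap (ι : A →+* Module.End F A) I :=
        (TwoSidedIdeal.mem_comap _).2 haI
      rw [h] at this
      simpa using this
    have hJc : (TwoSidedIdeal.comap (ι : A →+* Module.End F A) J : TwoSidedIdeal A) ≠ ⊥ := by
      intro h
      apply hb0
      have : b ∈ TwoSidedIdeal.comap (ι : A →+* Module.End F A) J :=
        (TwoSidedIdeal.mem_comap _).2 hbJ
      rw [h] at this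
      simpa using this
    obtain ⟨x, hx, y, hy, hxy⟩ := hprime _ _ hIc hJc
    refine ⟨ι x, (TwoSidedIdeal.mem_comap _).1 hx, ι y, (TwoSidedIdeal.mem_comap _).1 hy, ?_⟩
    intro hmem
    rw [← map_mul] at hmem
    exact hxy (hMdisj _ hmem)
  · -- nonzero ideals of the quotient meet the image of A
    intro J hMJ
    by_contra h
    push_neg at h
    refine hMJ.ne' (hMmax J hMJ.le fun a ha => ?_)
    by_contra ha0
    have := h a ha
    exact ha0 (hMdisj a this)
end

section
/- Let Q be a ring, e ∈ Q an idempotent, F a subfield of the center of Q, and ξ, υ ∈ eQ elements such that ξ and υ are principally nilpotent in the F-subalgebra B̃ of Q generated by ξ and υ. Let B be the F-subalgebra of eQe generated by ξe and υe. Then ξe and υe are principally nilpotent elements of B. -/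
/-- Let `Q` be a ring, `e` an idempotent, `F` a subfield of the center of `Q`,
and `ξ, υ ∈ eQ` principally nilpotent in the `F`-subalgebra `B̃` of `Q`
generated by `ξ` and `υ`.  Then `ξe` and `υe` are principally nilpotent
elements of the `F`-subalgebra `B` of the corner ring `eQe` generated by `ξe`
and `υe` (with unit `e`): every element of `(ξe)B` and of `(υe)B` is
nilpotent. -/
theorem corner_principally_nilpotent {Q : Type*} [Ring Q] (e : Q)
    (he : IsIdempotentElem e) (F : Subring Q) (hFcent : F ≤ Subring.center Q)
    (hFfield : IsField F) (ξ υ : Q) (hξ : e * ξ = ξ) (hυ : e * υ = υ)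
    -- `ξ` and `υ` are principally nilpotent in `B̃`, the `F`-subalgebra of `Q`
    -- generated by `ξ` and `υ`:
    (hξnil : ∀ b ∈ Subring.closure ((F : Set Q) ∪ {ξ, υ}), IsNilpotent (ξ * b))
    (hυnil : ∀ b ∈ Subring.closure ((F : Set Q) ∪ {ξ, υ}), IsNilpotent (υ * b)) :
    -- `B` is the `F`-subalgebra of `eQe` generated by `ξe` and `υe`
    -- (a non-unital subring of `Q` containing the unit `e` of `eQe` and the
    -- scalars `F·e`):
    ∀ b ∈ NonUnitalSubring.closure
        ({ξ * e, υ * e, e} ∪ {x : Q | ∃ f ∈ F, x = f * e}),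
      IsNilpotent (ξ * e * b) ∧ IsNilpotent (υ * e * b) := by
  have hee : e * e = e := he
  -- Step 1: every element of B̃ lies in eQ + F.
  have hform : ∀ c ∈ Subring.closure ((F : Set Q) ∪ {ξ, υ}),
      ∃ q : Q, ∃ f ∈ F, c = e * q + f := by
    intro c hc
    induction hc using Subring.closure_induction with
    | mem x hx =>
      rcases hx with hx | hx
      · exact ⟨0, x, hx, by simp⟩
      · rcases hx with rfl | rfl
        · exact ⟨x, 0, zero_mem F, by rw [hξ, add_zero]⟩
        · exact ⟨x, 0, zero_mem F, by rw [hυ, add_zero]⟩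
    | zero => exact ⟨0, 0, zero_mem F, by simp⟩
    | one => exact ⟨0, 1, one_mem F, by simp⟩
    | add x y hx hy ihx ihy =>
      obtain ⟨q, f, hf, rfl⟩ := ihx
      obtain ⟨q', f', hf', rfl⟩ := ihy
      exact ⟨q + q', f + f', add_mem hf hf', by noncomm_ring⟩
    | neg x hx ihx =>
      obtain ⟨q, f, hf, rfl⟩ := ihx
      exact ⟨-q, -f, neg_mem hf, by noncomm_ring⟩
    | mul x y hx hy ihx ihy =>
      obtain ⟨q, f, hf, rfl⟩ := ihx
      obtain ⟨q', f', hf', rfl⟩ := ihy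
      have hcomm : ∀ z : Q, f * z = z * f := fun z =>
        ((Subring.mem_center_iff.mp (hFcent hf)) z).symm
      refine ⟨q * (e * q') + q * f' + f * q', f * f', mul_mem hf hf', ?_⟩
      have : f * (e * q') = e * (f * q') := by
        rw [hcomm, mul_assoc, hcomm]
      calc (e * q + f) * (e * q' + f')
          = e * q * (e * q') + e * q * f' + f * (e * q') + f * f' := by noncomm_ring
        _ = e * (q * (e * q') + q * f' + f * q') + f * f' := by
            rw [this]; noncomm_ring
  -- Step 2: sandwich identity on B̃.
  have hsand : ∀ c ∈ Subring.closure ((F : Set Q) ∪ {ξ, υ}),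
      e * (c * e) = c * e := by
    intro c hc
    obtain ⟨q, f, hf, rfl⟩ := hform c hc
    have hcomm : e * f = f * e :=
      (Subring.mem_center_iff.mp (hFcent hf)) e
    have h1 : e * (e * q * e) = e * q * e := by
      rw [← mul_assoc, ← mul_assoc, hee]
    have h2 : e * (f * e) = f * e := by
      rw [← mul_assoc, hcomm, mul_assoc, hee]
    calc e * ((e * q + f) * e) = e * (e * q * e) + e * (f * e) := by noncomm_ring
      _ = e * q * e + f * e := by rw [h1, h2]
      _ = (e * q + f) * e := by noncomm_ring
  -- Step 3: every element of B is of the form c*e with c ∈ B̃.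
  have hB : ∀ b ∈ NonUnitalSubring.closure
      ({ξ * e, υ * e, e} ∪ {x : Q | ∃ f ∈ F, x = f * e}),
      ∃ c ∈ Subring.closure ((F : Set Q) ∪ {ξ, υ}), b = c * e := by
    intro b hb
    induction hb using NonUnitalSubring.closure_induction with
    | mem x hx =>
      rcases hx with (rfl | rfl | rfl) | ⟨f, hf, rfl⟩
      · exact ⟨ξ, Subring.subset_closure (Or.inr (Or.inl rfl)), rfl⟩
      · exact ⟨υ, Subring.subset_closure (Or.inr (Or.inr rfl)), rfl⟩
      · exact ⟨1, one_mem _, by simp⟩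
      · exact ⟨f, Subring.subset_closure (Or.inl hf), rfl⟩
    | zero => exact ⟨0, zero_mem _, by simp⟩
    | add x y hx hy ihx ihy =>
      obtain ⟨c, hc, rfl⟩ := ihx
      obtain ⟨c', hc', rfl⟩ := ihy
      exact ⟨c + c', add_mem hc hc', by noncomm_ring⟩
    | neg x hx ihx =>
      obtain ⟨c, hc, rfl⟩ := ihx
      exact ⟨-c, neg_mem hc, by noncomm_ring⟩
    | mul x y hx hy ihx ihy =>
      obtain ⟨c, hc, rfl⟩ := ihx
      obtain ⟨c', hc', rfl⟩ := ihy
      refine ⟨c * c', mul_mem hc hc', ?_⟩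
      calc c * e * (c' * e) = c * (e * (c' * e)) := by noncomm_ring
        _ = c * (c' * e) := by rw [hsand c' hc']
        _ = c * c' * e := by noncomm_ring
  -- Step 4: power identity and conclusion.
  have hpow : ∀ (z c : Q), e * z = z → ∀ n : ℕ,
      (z * c * e) ^ (n + 1) = (z * c) ^ (n + 1) * e := by
    intro z c hz n
    induction n with
    | zero => simp
    | succ n ih =>
      calc (z * c * e) ^ (n + 2) = (z * c * e) ^ (n + 1) * (z * c * e) := by
            rw [pow_succ]
        _ = (z * c) ^ (n + 1) * e * (z * c * e) := by rw [ih]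
        _ = (z * c) ^ (n + 1) * ((e * z) * c * e) := by noncomm_ring
        _ = (z * c) ^ (n + 2) * e := by rw [hz, pow_succ]; noncomm_ring
  intro b hb
  obtain ⟨c, hc, rfl⟩ := hB b hb
  constructor
  · obtain ⟨k, hk⟩ := hξnil c hc
    refine ⟨k + 1, ?_⟩
    have : ξ * e * (c * e) = ξ * c * e := by
      rw [mul_assoc ξ e (c * e), hsand c hc, ← mul_assoc]
    rw [this, hpow ξ c hξ k, pow_succ, hk, zero_mul, zero_mul]
  · obtain ⟨k, hk⟩ := hυnil c hc
    refine ⟨k + 1, ?_⟩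
    have : υ * e * (c * e) = υ * c * e := by
      rw [mul_assoc υ e (c * e), hsand c hc, ← mul_assoc]
    rw [this, hpow υ c hυ k, pow_succ, hk, zero_mul, zero_mul]
end

section
/- Let R be a ring satisfying (NK) witnessed by principally nilpotent elements x, y with x + y not nilpotent and x + y minimal non-nilpotent, and let I be a nonzero two-sided ideal of R. Set ξ = (x+y)^n x and υ = (x+y)^n y where n is such that (x+y)^n ∈ I. Then ξ, υ ∈ I, ξ and υ are principally nilpotent, and ξ + υ = (x+y)^{n+1} is not nilpotent; in particular ξ + υ ∈ I witnesses (NK) inside I. -/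
/-- An element `a` of a ring is *minimal non-nilpotent* if `a` is not nilpotent
but some power of `a` lies in every nonzero two-sided ideal. -/
def MinimalNonNilpotent {R : Type*} [Ring R] (a : R) : Prop :=
  ¬ IsNilpotent a ∧ ∀ J : TwoSidedIdeal R, J ≠ ⊥ → ∃ n : ℕ, a ^ n ∈ J

private lemma pn_mul_left {R : Type*} [Ring R] {x : R}
    (hx : PrincipallyNilpotent x) (s : R) : PrincipallyNilpotent (s * x) := by
  intro r
  obtain ⟨m, hm⟩ := hx (r * s)
  refine ⟨m + 1, ?_⟩
  have key : ∀ k : ℕ, (s * x * r) ^ (k + 1) = s * (x * (r * s)) ^ k * (x * r) := by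
    intro k
    induction k with
    | zero => simp [mul_assoc]
    | succ k ih =>
      rw [pow_succ, ih, pow_succ]
      simp [mul_assoc]
  rw [key m, hm]
  simp

/-- If `x`, `y` are principally nilpotent with `x + y` minimal non-nilpotent and
`(x+y)^n ∈ I` for a nonzero two-sided ideal `I`, then `ξ = (x+y)^n x` and
`υ = (x+y)^n y` lie in `I`, are principally nilpotent, and their sum
`(x+y)^{n+1}` is not nilpotent and lies in `I`; so they witness (NK) inside `I`. -/
theorem NK_witness_inside_ideal {R : Type*} [Ring R] (x y : R)
    (hx : PrincipallyNilpotent x) (hy : PrincipallyNilpotent y)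
    (hxy : ¬ IsNilpotent (x + y)) (hmin : MinimalNonNilpotent (x + y))
    (I : TwoSidedIdeal R) (hI : I ≠ ⊥) (n : ℕ) (hn : (x + y) ^ n ∈ I) :
    (x + y) ^ n * x ∈ I ∧ (x + y) ^ n * y ∈ I ∧
      PrincipallyNilpotent ((x + y) ^ n * x) ∧
      PrincipallyNilpotent ((x + y) ^ n * y) ∧
      (x + y) ^ n * x + (x + y) ^ n * y = (x + y) ^ (n + 1) ∧
      ¬ IsNilpotent ((x + y) ^ n * x + (x + y) ^ n * y) ∧
      (x + y) ^ n * x + (x + y) ^ n * y ∈ I := by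
  have hsum : (x + y) ^ n * x + (x + y) ^ n * y = (x + y) ^ (n + 1) := by
    rw [pow_succ, mul_add]
  refine ⟨I.mul_mem_right _ _ hn, I.mul_mem_right _ _ hn,
    pn_mul_left hx _, pn_mul_left hy _, hsum, ?_, ?_⟩
  · rw [hsum]
    rintro ⟨m, hm⟩
    exact hxy ⟨(n + 1) * m, by rw [pow_mul]; exact hm⟩
  · rw [hsum, pow_succ]
    exact I.mul_mem_right _ _ hn
end
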